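/- The 2-D Hartley transform reconstruction identity: if B = (T + T^(c) + T^(r) − T^(cr))/2 where T = H·A·H for the exact normalized Hartley matrix H of order n, and T^(c), T^(r), T^(cr) are obtained from T by the index maps (i,j) ↦ (i, n−j mod n), (i,j) ↦ (n−i mod n, j), (i,j) ↦ (n−i mod n, n−j mod n) respectively, then applying the same operation to B recovers A. -/

import Mathlib

noncomputable def cas (x : ℝ) : ℝ := Real.cos x + Real.sin x

noncomputable def hartleyMatrix (n : ℕ) : Matrix (Fin n) (Fin n) ℝ :=
  Matrix.of fun i k =>
    (1 / Real.sqrt n) * cas (2 * Real.pi * ((i : ℕ) : ℝ) * ((k : ℕ) : ℝ) / (n : ℝ))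

/-- Column flip: `(i, j) ↦ (i, -j)` (i.e. `(i, (n - j) mod n)`). -/
def flipC {n : ℕ} [NeZero n] (T : Matrix (Fin n) (Fin n) ℝ) : Matrix (Fin n) (Fin n) ℝ :=
  Matrix.of fun i j => T i (-j)

/-- Row flip: `(i, j) ↦ (-i, j)`. -/
def flipR {n : ℕ} [NeZero n] (T : Matrix (Fin n) (Fin n) ℝ) : Matrix (Fin n) (Fin n) ℝ :=
  Matrix.of fun i j => T (-i) j

/-- Both flips: `(i, j) ↦ (-i, -j)`. -/
def flipCR {n : ℕ} [NeZero n] (T : Matrix (Fin n) (Fin n) ℝ) : Matrix (Fin n) (Fin n) ℝ :=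
  Matrix.of fun i j => T (-i) (-j)

/-- The 2-D Hartley transform via the flip-combination formula. -/
noncomputable def hartley2D {n : ℕ} [NeZero n] (A : Matrix (Fin n) (Fin n) ℝ) :
    Matrix (Fin n) (Fin n) ℝ :=
  (1 / 2 : ℝ) •
    (hartleyMatrix n * A * hartleyMatrix n + flipC (hartleyMatrix n * A * hartleyMatrix n) +
      flipR (hartleyMatrix n * A * hartleyMatrix n) -
      flipCR (hartleyMatrix n * A * hartleyMatrix n))

lemma sum_exp_eq (n : ℕ) [NeZero n] (m : ℤ) :
    ∑ k : Fin n, Complex.exp ((2 * Real.pi * m * k / n : ℝ) * Complex.I) =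
      if (n:ℤ) ∣ m then (n:ℂ) else 0 := by
  have hn : (n:ℝ) ≠ 0 := Nat.cast_ne_zero.mpr (NeZero.ne n)
  have hnC : (n:ℂ) ≠ 0 := Nat.cast_ne_zero.mpr (NeZero.ne n)
  have hexp : ∀ k : Fin n, Complex.exp ((2 * Real.pi * m * k / n : ℝ) * Complex.I)
      = Complex.exp ((2 * Real.pi * m / n : ℝ) * Complex.I) ^ (k:ℕ) := by
    intro k
    rw [← Complex.exp_nat_mul]
    congr 1
    push_cast
    ring
  simp_rw [hexp]
  rw [Fin.sum_univ_eq_sum_range]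
  by_cases h : (n:ℤ) ∣ m
  · obtain ⟨c, rfl⟩ := h
    have h1 : (((2 * Real.pi * ((n:ℤ)*c : ℤ) / n : ℝ)) : ℂ) * Complex.I
        = (c:ℤ) * (2 * Real.pi * Complex.I) := by
      push_cast
      field_simp
    rw [h1, Complex.exp_int_mul_two_pi_mul_I]
    simp [Dvd.intro c rfl]
  · have hζn : Complex.exp ((2 * Real.pi * m / n : ℝ) * Complex.I) ^ n = 1 := by
      rw [← Complex.exp_nat_mul]
      have h2 : (n:ℂ) * (((2 * Real.pi * m / n : ℝ) : ℂ) * Complex.I)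
          = (m:ℤ) * (2 * Real.pi * Complex.I) := by
        push_cast
        field_simp
      rw [h2, Complex.exp_int_mul_two_pi_mul_I]
    have hζ : Complex.exp ((2 * Real.pi * m / n : ℝ) * Complex.I) ≠ 1 := by
      intro hc
      rw [Complex.exp_eq_one_iff] at hc
      obtain ⟨k, hk⟩ := hc
      apply h ⟨k, ?_⟩
      have hπ : (Real.pi : ℂ) ≠ 0 := by exact_mod_cast Real.pi_ne_zero
      have hI : Complex.I ≠ 0 := Complex.I_ne_zero
      have hne : (2 * (Real.pi:ℂ) * Complex.I) ≠ 0 := by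
        simp [hπ, hI]
      have h2 : ((m:ℂ)) = (n:ℂ) * k := by
        push_cast at hk
        field_simp at hk
        refine mul_left_cancel₀ hne ?_
        linear_combination (2 * (Real.pi:ℂ) * Complex.I) * hk
      exact_mod_cast h2
    rw [geom_sum_eq hζ, hζn]
    simp [h]

lemma sum_cos_eq (n : ℕ) [NeZero n] (m : ℤ) :
    ∑ k : Fin n, Real.cos (2 * Real.pi * m * k / n) =
      if (n:ℤ) ∣ m then (n:ℝ) else 0 := by
  have := congrArg Complex.re (sum_exp_eq n m)
  rw [Complex.re_sum] at this
  simp only [Complex.exp_ofReal_mul_I_re] at this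
  split_ifs with h <;> simp [h] at this ⊢ <;> exact this

lemma sum_sin_eq (n : ℕ) [NeZero n] (m : ℤ) :
    ∑ k : Fin n, Real.sin (2 * Real.pi * m * k / n) = 0 := by
  have := congrArg Complex.im (sum_exp_eq n m)
  rw [Complex.im_sum] at this
  simp only [Complex.exp_ofReal_mul_I_im] at this
  split_ifs at this with h <;> simpa using this

lemma cas_mul_cas (a b : ℝ) : cas a * cas b = Real.cos (a - b) + Real.sin (a + b) := by
  simp [cas, Real.cos_sub, Real.sin_add]
  ring

lemma hartley_mul_self (n : ℕ) [NeZero n] : hartleyMatrix n * hartleyMatrix n = 1 := by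
  have hn0 : 0 < n := Nat.pos_of_ne_zero (NeZero.ne n)
  have hn : (n:ℝ) ≠ 0 := Nat.cast_ne_zero.mpr (NeZero.ne n)
  ext i j
  rw [Matrix.mul_apply]
  have key : ∀ k : Fin n,
      hartleyMatrix n i k * hartleyMatrix n k j =
        (1/n) * (Real.cos (2 * Real.pi * (((i:ℤ) - (j:ℤ) : ℤ) : ℝ) * k / n)
          + Real.sin (2 * Real.pi * (((i:ℤ) + (j:ℤ) : ℤ) : ℝ) * k / n)) := by
    intro k
    have hs : (1 / Real.sqrt n) * (1 / Real.sqrt n) = 1 / n := by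
      rw [div_mul_div_comm, Real.mul_self_sqrt (by positivity)]
      norm_num
    simp only [hartleyMatrix, Matrix.of_apply]
    rw [show ∀ a b c d : ℝ, a * b * (c * d) = (a * c) * (b * d) from fun a b c d => by ring, hs,
      cas_mul_cas]
    push_cast
    congr 2
    · ring
    · ring
  rw [Finset.sum_congr rfl (fun k _ => key k), ← Finset.mul_sum, Finset.sum_add_distrib,
    sum_cos_eq, sum_sin_eq]
  have hdvd : ((n:ℤ) ∣ (i:ℤ) - (j:ℤ)) ↔ i = j := by
    constructor
    · intro h
      have hi := i.isLt; have hj := j.isLt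
      have h1 : (i:ℤ) - (j:ℤ) = 0 := by
        rcases h with ⟨c, hc⟩
        have hcb : -1 < c ∧ c < 1 := by
          constructor <;> nlinarith [hc, (by exact_mod_cast hi : (i:ℤ) < n),
            (by exact_mod_cast hj : (j:ℤ) < n), (by positivity : (0:ℤ) ≤ (i:ℤ)),
            (by positivity : (0:ℤ) ≤ (j:ℤ)), (by exact_mod_cast hn0 : (0:ℤ) < n)]
        have : c = 0 := by omega
        simp [hc, this]
      have : (i:ℤ) = (j:ℤ) := by omega
      exact Fin.ext (by exact_mod_cast this)
    · rintro rfl; simp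
  by_cases hij : i = j
  · simp [hij, Matrix.one_apply, hdvd.mpr hij, hn]
  · have : ¬ (n:ℤ) ∣ (i:ℤ) - (j:ℤ) := fun h => hij (hdvd.mp h)
    simp [hij, Matrix.one_apply, this]

def Jmat (n : ℕ) [NeZero n] : Matrix (Fin n) (Fin n) ℝ :=
  Matrix.of fun i j => if i = -j then 1 else 0

lemma flipC_eq {n : ℕ} [NeZero n] (M : Matrix (Fin n) (Fin n) ℝ) :
    flipC M = M * Jmat n := by
  ext i j
  simp only [flipC, Jmat, Matrix.mul_apply, Matrix.of_apply, mul_ite, mul_one, mul_zero]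
  rw [Finset.sum_ite_eq' Finset.univ (-j) (fun k => M i k)]
  simp

lemma flipR_eq {n : ℕ} [NeZero n] (M : Matrix (Fin n) (Fin n) ℝ) :
    flipR M = Jmat n * M := by
  ext i j
  simp only [flipR, Jmat, Matrix.mul_apply, Matrix.of_apply, ite_mul, one_mul, zero_mul]
  have : ∀ k : Fin n, (if i = -k then M k j else 0) = if k = -i then M k j else 0 := by
    intro k
    congr 1
    rw [eq_iff_iff]
    constructor
    · rintro rfl; simp
    · rintro rfl; simp
  simp_rw [this]
  rw [Finset.sum_ite_eq' Finset.univ (-i) (fun k => M k j)]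
  simp

lemma flipCR_eq {n : ℕ} [NeZero n] (M : Matrix (Fin n) (Fin n) ℝ) :
    flipCR M = Jmat n * M * Jmat n := by
  rw [← flipC_eq, ← flipR_eq]
  rfl

lemma Jmat_mul_Jmat (n : ℕ) [NeZero n] : Jmat n * Jmat n = 1 := by
  rw [← flipC_eq]
  ext i j
  simp [flipC, Jmat, Matrix.one_apply, neg_eq_iff_eq_neg, eq_comm]

-- cas periodicity

lemma cas_periodic : Function.Periodic cas (2 * Real.pi) := fun x => by
  simp [cas, Real.cos_add_two_pi, Real.sin_add_two_pi]

lemma hartley_neg {n : ℕ} [NeZero n] (i j : Fin n) :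
    hartleyMatrix n i (-j) = hartleyMatrix n (-i) j := by
  have key : ∀ a b : Fin n,
      cas (2 * Real.pi * ((a:ℕ):ℝ) * (((-b : Fin n):ℕ):ℝ) / n)
        = cas (-(2 * Real.pi * ((a:ℕ):ℝ) * ((b:ℕ):ℝ) / n)) := by
    intro a b
    by_cases hb : b = 0
    · simp [hb]
    · have hbn : ((-b : Fin n) : ℕ) = n - (b:ℕ) := by
        rw [Fin.coe_neg]
        have h1 : (b:ℕ) ≠ 0 := fun h => hb (Fin.ext h)
        have h2 : (b:ℕ) < n := b.isLt
        rw [Nat.mod_eq_of_lt (by omega)]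
      have hble : (b:ℕ) ≤ n := le_of_lt b.isLt
      rw [hbn, Nat.cast_sub hble]
      have harg : 2 * Real.pi * ((a:ℕ):ℝ) * ((n:ℝ) - ((b:ℕ):ℝ)) / n
          = -(2 * Real.pi * ((a:ℕ):ℝ) * ((b:ℕ):ℝ) / n) + (a:ℕ) * (2 * Real.pi) := by
        have hn : (n:ℝ) ≠ 0 := Nat.cast_ne_zero.mpr (NeZero.ne n)
        field_simp
        ring
      rw [harg, (cas_periodic.nat_mul (a:ℕ)) _]
  simp only [hartleyMatrix, Matrix.of_apply]
  rw [key i j]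
  rw [show ∀ x y : Fin n, cas (2*Real.pi*(((-x:Fin n):ℕ):ℝ)*((y:ℕ):ℝ)/n) = cas (2*Real.pi*((y:ℕ):ℝ)*(((-x:Fin n):ℕ):ℝ)/n) from fun x y => by ring_nf]
  rw [key j i]
  ring_nf

lemma hartley_comm_Jmat (n : ℕ) [NeZero n] :
    hartleyMatrix n * Jmat n = Jmat n * hartleyMatrix n := by
  rw [← flipC_eq, ← flipR_eq]
  ext i j
  exact hartley_neg i j

theorem hartley2D_involutive {n : ℕ} [NeZero n] (A : Matrix (Fin n) (Fin n) ℝ) :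
    hartley2D (hartley2D A) = A := by
  set H := hartleyMatrix n with hH
  set J := Jmat n with hJ
  have HH : H * H = 1 := hartley_mul_self n
  have JJ : J * J = 1 := Jmat_mul_Jmat n
  have HJ : H * J = J * H := hartley_comm_Jmat n
  have e1 : ∀ X : Matrix (Fin n) (Fin n) ℝ, H * (H * X) = X := fun X => by
    rw [← Matrix.mul_assoc, HH, Matrix.one_mul]
  have e2 : ∀ X : Matrix (Fin n) (Fin n) ℝ, J * (J * X) = X := fun X => by
    rw [← Matrix.mul_assoc, JJ, Matrix.one_mul]
  have e3 : ∀ X : Matrix (Fin n) (Fin n) ℝ, H * (J * X) = J * (H * X) := fun X => by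
    rw [← Matrix.mul_assoc, HJ, Matrix.mul_assoc]
  simp only [hartley2D, flipC_eq, flipR_eq, flipCR_eq, ← hH, ← hJ,
    Matrix.smul_mul, Matrix.mul_smul, smul_add, smul_sub, smul_smul,
    mul_add, add_mul, mul_sub, sub_mul, Matrix.mul_assoc,
    e1, e2, e3, HH, JJ, HJ, Matrix.mul_one, Matrix.one_mul, mul_one, one_mul]
  module
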